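/- Let n ≥ 1, let σ > 0 and let φ ∈ (−1, 1). Let Σ₀ be the n × n real matrix all of whose entries equal σ², and let Σ be the n × n matrix with entries Σ[i,j] = σ² φ^{|i−j|}. Assume Σ is positive semidefinite (Σ₀ is automatically positive semidefinite). Let Σ₀^{1/2} denote the positive semidefinite square root of Σ₀, and note that Σ₀^{1/2} Σ Σ₀^{1/2} is positive semidefinite. Then the trace of the positive semidefinite square root of Σ₀^{1/2} Σ Σ₀^{1/2} equals σ² · √(n(1 − φ²) − 2φ(1 − φⁿ)) / (1 − φ). -/

import Mathlib

/-- The positive semidefinite square root of a positive semidefinite matrix, as defined in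
the older Mathlib (removed since). -/
noncomputable def Matrix.PosSemidef.sqrt {𝕜 : Type*} [RCLike 𝕜] [PartialOrder 𝕜] [StarOrderedRing 𝕜] {n : Type*} [Fintype n]
    [DecidableEq n] {A : Matrix n n 𝕜} (hA : A.PosSemidef) : Matrix n n 𝕜 :=
  hA.1.eigenvectorUnitary.1 * Matrix.diagonal ((↑) ∘ (√·) ∘ hA.1.eigenvalues) *
  (star hA.1.eigenvectorUnitary : Matrix n n 𝕜)

open scoped MatrixOrder in
lemma Matrix.PosSemidef.eq_sqrt_of_sq_eq {m : Type*} [Fintype m] [DecidableEq m]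
    {A B : Matrix m m ℝ} (hB : B.PosSemidef) (hA : A.PosSemidef) (h : B ^ 2 = A) :
    B = hA.sqrt := by
  have e : hA.sqrt = CFC.sqrt A := by
    rw [CFC.sqrt_eq_real_sqrt A (Matrix.nonneg_iff_posSemidef.2 hA),
      cfcₙ_eq_cfc (hf := Real.continuous_sqrt.continuousOn) (hf0 := Real.sqrt_zero), hA.1.cfc_eq,
      Matrix.IsHermitian.cfc, Matrix.PosSemidef.sqrt, Unitary.conjStarAlgAut_apply]
  rw [e, eq_comm, CFC.sqrt_eq_iff A B (Matrix.nonneg_iff_posSemidef.2 hA)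
    (Matrix.nonneg_iff_posSemidef.2 hB), ← pow_two, h]

open Matrix Finset

private lemma ar1_sum (φ : ℝ) (m : ℕ) :
    (∑ i ∈ Finset.range m, ∑ j ∈ Finset.range m,
        φ ^ ((i : ℤ) - (j : ℤ)).natAbs) * (1 - φ) ^ 2
      = m * (1 - φ ^ 2) - 2 * φ * (1 - φ ^ m) := by
  induction m with
  | zero => simp
  | succ m ih =>
    set G := ∑ k ∈ Finset.range (m + 1), φ ^ k with hG
    have e1 : ∑ j ∈ Finset.range (m + 1), φ ^ ((m : ℤ) - (j : ℤ)).natAbs = G := by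
      rw [hG, ← Finset.sum_range_reflect (fun k => φ ^ k) (m + 1)]
      refine Finset.sum_congr rfl fun j hj => ?_
      simp only [Finset.mem_range] at hj
      congr 1
      omega
    have e2 : ∑ i ∈ Finset.range m, φ ^ ((i : ℤ) - (m : ℤ)).natAbs = G - 1 := by
      have h1 : ∑ i ∈ Finset.range m, φ ^ ((i : ℤ) - (m : ℤ)).natAbs
          = ∑ k ∈ Finset.range m, φ ^ (k + 1) := by
        rw [← Finset.sum_range_reflect (fun k => φ ^ (k + 1)) m]
        refine Finset.sum_congr rfl fun i hi => ?_
        simp only [Finset.mem_range] at hi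
        congr 1
        omega
      have h2 : G = (∑ k ∈ Finset.range m, φ ^ (k + 1)) + 1 := by
        rw [hG, Finset.sum_range_succ']; simp
      rw [h1, h2]; ring
    have key : ∑ i ∈ Finset.range (m + 1), ∑ j ∈ Finset.range (m + 1),
        φ ^ ((i : ℤ) - (j : ℤ)).natAbs
        = (∑ i ∈ Finset.range m, ∑ j ∈ Finset.range m, φ ^ ((i : ℤ) - (j : ℤ)).natAbs)
          + (G - 1) + G := by
      rw [Finset.sum_range_succ, e1]
      congr 1
      have : ∀ i ∈ Finset.range m, ∑ j ∈ Finset.range (m + 1),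
          φ ^ ((i : ℤ) - (j : ℤ)).natAbs
          = (∑ j ∈ Finset.range m, φ ^ ((i : ℤ) - (j : ℤ)).natAbs)
            + φ ^ ((i : ℤ) - (m : ℤ)).natAbs := fun i _ => Finset.sum_range_succ _ m
      rw [Finset.sum_congr rfl this, Finset.sum_add_distrib, e2]
    have geo : G * (φ - 1) = φ ^ (m + 1) - 1 := geom_sum_mul φ (m + 1)
    rw [key]
    push_cast
    linear_combination ih - 2 * (1 - φ) * geo

/-- Trace formula for the AR(1) Wasserstein-2 distance computation: with `S0` the `n × n`
matrix with all entries `σ²` (covariance of the constant-in-time base model) and `S` the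
AR(1) covariance matrix with entries `σ² φ^{|i−j|}`, both positive semidefinite, the trace
of the positive semidefinite square root of `S0^{1/2} S S0^{1/2}` equals
`σ² √(n(1 − φ²) − 2φ(1 − φⁿ)) / (1 − φ)`. -/
theorem stmt_9 (n : ℕ) (hn : 1 ≤ n) (σ φ : ℝ) (hσ : 0 < σ)
    (hφ1 : -1 < φ) (hφ2 : φ < 1)
    (S0 S : Matrix (Fin n) (Fin n) ℝ)
    (hS0def : S0 = Matrix.of fun _ _ => σ ^ 2)
    (hSdef : S = Matrix.of fun (i j : Fin n) => σ ^ 2 * φ ^ ((i : ℤ) - (j : ℤ)).natAbs)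
    (hS0 : S0.PosSemidef) (hS : S.PosSemidef)
    (hM : (hS0.sqrt * S * hS0.sqrt).PosSemidef) :
    hM.sqrt.trace =
      σ ^ 2 * Real.sqrt ((n : ℝ) * (1 - φ ^ 2) - 2 * φ * (1 - φ ^ n)) / (1 - φ) := by
  have hn' : (0 : ℝ) < n := by exact_mod_cast hn
  set J : Matrix (Fin n) (Fin n) ℝ := Matrix.of (fun _ _ => (1 : ℝ)) with hJ
  -- a • J is PSD for a ≥ 0
  have hJpsd : ∀ a : ℝ, 0 ≤ a → (a • J).PosSemidef := by
    intro a ha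
    have : a • J = (Matrix.of (fun (_ : Fin 1) (_ : Fin n) => Real.sqrt a))ᴴ
        * Matrix.of (fun (_ : Fin 1) (_ : Fin n) => Real.sqrt a) := by
      ext i j
      simp [Matrix.mul_apply, hJ, Real.mul_self_sqrt ha]
    rw [this]
    exact Matrix.posSemidef_conjTranspose_mul_self _
  have hJJ : J * J = (n : ℝ) • J := by
    ext i j
    simp [Matrix.mul_apply, hJ]
  set a : ℝ := σ / Real.sqrt n with haa
  have ha : 0 ≤ a := div_nonneg hσ.le (Real.sqrt_nonneg _)
  have haan : a * a * n = σ ^ 2 := by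
    rw [haa, div_mul_div_comm, Real.mul_self_sqrt hn'.le]
    field_simp
  have hsq : (a • J) ^ 2 = S0 := by
    rw [pow_two, Matrix.smul_mul, Matrix.mul_smul, smul_smul, hJJ, smul_smul, haan, hS0def]
    ext i j
    simp [hJ]
  have hsqrt0 : a • J = hS0.sqrt := (hJpsd a ha).eq_sqrt_of_sq_eq hS0 hsq
  -- sum of entries of S
  set s : ℝ := ∑ i : Fin n, ∑ j : Fin n, S i j with hss
  have hJSJ : J * S * J = s • J := by
    ext i j
    simp only [Matrix.mul_apply, hJ, Matrix.of_apply, one_mul, mul_one, Matrix.smul_apply,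
      smul_eq_mul, hss]
    rw [Finset.sum_comm]
  have hMeq : hS0.sqrt * S * hS0.sqrt = (a * a * s) • J := by
    rw [← hsqrt0, Matrix.smul_mul, Matrix.smul_mul, Matrix.mul_smul, smul_smul, hJSJ,
      smul_smul]
  have hs0 : 0 ≤ s := by
    have := hS.dotProduct_mulVec_nonneg (fun _ => 1)
    simpa [dotProduct, Matrix.mulVec, hss] using this
  set c : ℝ := Real.sqrt (a * a * s / n) with hcc
  have hc0 : 0 ≤ a * a * s / n := by positivity
  have hc2 : c * c * n = a * a * s := by
    rw [hcc, Real.mul_self_sqrt hc0]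
    field_simp
  have hTsq : (c • J) ^ 2 = hS0.sqrt * S * hS0.sqrt := by
    rw [pow_two, Matrix.smul_mul, Matrix.mul_smul, smul_smul, hJJ, smul_smul, hMeq, hc2]
  have hsqrtM : c • J = hM.sqrt := (hJpsd c (Real.sqrt_nonneg _)).eq_sqrt_of_sq_eq hM hTsq
  rw [← hsqrtM]
  have htr : (c • J).trace = n * c := by
    simp [Matrix.trace, Matrix.diag, hJ, mul_comm]
  rw [htr]
  -- now numeric computation
  set F : ℝ := ∑ i ∈ Finset.range n, ∑ j ∈ Finset.range n,
      φ ^ ((i : ℤ) - (j : ℤ)).natAbs with hFF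
  have conv1 : ∀ f : ℕ → ℕ → ℝ, ∑ i : Fin n, ∑ j : Fin n, f i j
      = ∑ i ∈ Finset.range n, ∑ j ∈ Finset.range n, f i j := by
    intro f
    calc ∑ i : Fin n, ∑ j : Fin n, f i j
        = ∑ i : Fin n, ∑ j ∈ Finset.range n, f i j :=
          Finset.sum_congr rfl fun i _ => Fin.sum_univ_eq_sum_range (fun j => f i j) n
      _ = ∑ i ∈ Finset.range n, ∑ j ∈ Finset.range n, f i j :=
          Fin.sum_univ_eq_sum_range (fun i => ∑ j ∈ Finset.range n, f i j) n
  have hsF : s = σ ^ 2 * F := by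
    rw [hss, hSdef]
    simp only [Matrix.of_apply]
    rw [conv1 (fun i j => σ ^ 2 * φ ^ ((i : ℤ) - (j : ℤ)).natAbs), hFF, Finset.mul_sum]
    exact Finset.sum_congr rfl fun i _ => (Finset.mul_sum _ _ _).symm
  have hσ2 : (0 : ℝ) < σ ^ 2 := by positivity
  have hFnn : 0 ≤ F := by
    have h' : σ ^ 2 * 0 ≤ σ ^ 2 * F := by rw [← hsF]; simpa using hs0
    exact le_of_mul_le_mul_left h' hσ2
  have hR : (n : ℝ) * (1 - φ ^ 2) - 2 * φ * (1 - φ ^ n) = F * (1 - φ) ^ 2 :=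
    (ar1_sum φ n).symm
  have h1φ : 0 < 1 - φ := by linarith
  rw [hR, Real.sqrt_mul hFnn, Real.sqrt_sq h1φ.le]
  have haa2 : a * a = σ ^ 2 / n := by
    rw [haa, div_mul_div_comm, Real.mul_self_sqrt hn'.le]
    ring_nf
  have hnc : (n : ℝ) * c = σ ^ 2 * Real.sqrt F := by
    have harg : a * a * s / n = (σ ^ 2 / n) ^ 2 * F := by
      rw [haa2, hsF]
      field_simp
    rw [hcc, harg, Real.sqrt_mul (by positivity) F, Real.sqrt_sq (by positivity)]
    field_simp
  rw [hnc]
  field_simp
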